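/- Consider n buyers with budgets b_i ≥ 0 and values v_{i,j} ≥ 0 for m datasets. For any price vector p̂ ∈ ℝ≥0^m, there exists a clearable price vector p* ∈ ℝ≥0^m such that p*_j ≤ p̂_j for every dataset j ∈ [m] and r_i(p*) ≥ r_i(p̂) for every buyer i ∈ [n], where r_i(p) = min(b_i, Σ_{j ∈ [m] : v_{i,j} ≥ p_j} p_j). -/

import Mathlib

noncomputable section

/-- Buyer `i`'s desire at prices `p`: `d_i(p) = ∑_{j : v i j ≥ p j} p j`. -/
def desire {n m : ℕ} (v : Fin n → Fin m → ℝ) (p : Fin m → ℝ) (i : Fin n) : ℝ :=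
  ∑ j ∈ Finset.univ.filter (fun j => p j ≤ v i j), p j

/-- The revenue collected from buyer `i` at prices `p`: `r_i(p) = min (b i) (d_i(p))`. -/
def buyerRev {n m : ℕ} (b : Fin n → ℝ) (v : Fin n → Fin m → ℝ)
    (p : Fin m → ℝ) (i : Fin n) : ℝ :=
  min (b i) (desire v p i)

/-- A price vector `p` is clearable if for every dataset `j`, either `p j = 0` or
there is a satisfied buyer `i` (i.e. `d_i(p) ≤ b i`) with `v i j ≥ p j`. -/
def Clearable {n m : ℕ} (b : Fin n → ℝ) (v : Fin n → Fin m → ℝ)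
    (p : Fin m → ℝ) : Prop :=
  ∀ j : Fin m, p j = 0 ∨ ∃ i : Fin n, desire v p i ≤ b i ∧ p j ≤ v i j

lemma desire_update {n m : ℕ} (v : Fin n → Fin m → ℝ) (p : Fin m → ℝ) (j : Fin m)
    (t : ℝ) (i : Fin n) :
    desire v (Function.update p j t) i =
      (if t ≤ v i j then t else 0) +
      ∑ k ∈ Finset.univ.filter (fun k => k ≠ j ∧ p k ≤ v i k), p k := by
  classical
  unfold desire
  rw [Finset.sum_filter, Finset.sum_filter,
    ← Finset.add_sum_erase _ _ (Finset.mem_univ j)]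
  congr 1
  · simp
  · have hz : (if (j ≠ j ∧ p j ≤ v i j) then p j else 0) = 0 := by simp
    rw [← Finset.sum_erase (f := fun k => if k ≠ j ∧ p k ≤ v i k then p k else 0) Finset.univ hz]
    apply Finset.sum_congr rfl
    intro k hk
    have hkj := Finset.ne_of_mem_erase hk
    simp [hkj, Function.update_of_ne hkj]

lemma desire_eq {n m : ℕ} (v : Fin n → Fin m → ℝ) (p : Fin m → ℝ) (j : Fin m) (i : Fin n) :
    desire v p i =
      (if p j ≤ v i j then p j else 0) +
      ∑ k ∈ Finset.univ.filter (fun k => k ≠ j ∧ p k ≤ v i k), p k := by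
  have := desire_update v p j (p j) i
  rwa [Function.update_eq_self] at this

/-- One improvement step: if dataset `j` is "bad" at `p`, its price can be strictly
decreased without decreasing any buyer's revenue. -/
lemma step {n m : ℕ} (b : Fin n → ℝ) (v : Fin n → Fin m → ℝ)
    (p : Fin m → ℝ) (j : Fin m) (hpj : 0 < p j)
    (hbad : ∀ i, p j ≤ v i j → b i < desire v p i) :
    ∃ t, 0 ≤ t ∧ t < p j ∧
      ∀ i, buyerRev b v p i ≤ buyerRev b v (Function.update p j t) i := by
  classical
  set D : Fin n → ℝ :=
    fun i => ∑ k ∈ Finset.univ.filter (fun k => k ≠ j ∧ p k ≤ v i k), p k with hD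
  set f : Fin n → ℝ := fun i => min (v i j) (b i - D i) with hf
  set M : ℝ := Finset.univ.fold max 0 f with hM
  have hM0 : 0 ≤ M := (Finset.le_fold_max _).2 (Or.inl le_rfl)
  -- key: for buyers with p j ≤ v i j, badness gives b i - D i < p j
  have hkey : ∀ i, p j ≤ v i j → b i - D i < p j := by
    intro i hij
    have := hbad i hij
    rw [desire_eq v p j i, if_pos hij] at this
    linarith
  have hMlt : M < p j := by
    rw [hM, Finset.fold_max_lt]
    refine ⟨hpj, fun i _ => ?_⟩
    by_cases hij : p j ≤ v i j
    · exact lt_of_le_of_lt (min_le_right _ _) (hkey i hij)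
    · exact lt_of_le_of_lt (min_le_left _ _) (lt_of_not_ge hij)
  refine ⟨min (p j) M, le_min hpj.le hM0, lt_of_le_of_lt (min_le_right _ _) hMlt, ?_⟩
  intro i
  set t := min (p j) M with ht
  have htpj : t ≤ p j := min_le_left _ _
  unfold buyerRev
  rw [desire_update v p j t i, desire_eq v p j i]
  by_cases hij : p j ≤ v i j
  · -- then badness applies; old revenue is b i; show new desire ≥ b i
    rw [if_pos hij, if_pos (le_trans htpj hij)]
    have hbD : b i - D i < p j := hkey i hij
    have hMf : f i ≤ M := (Finset.le_fold_max _).2 (Or.inr ⟨i, Finset.mem_univ i, le_rfl⟩)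
    have hfi : f i = b i - D i := min_eq_right (by linarith [hbD, hij] : b i - D i ≤ v i j)
    have htb : b i - D i ≤ t := by
      rw [ht]
      exact le_min hbD.le (hfi ▸ hMf)
    have h1 : b i ≤ t + D i := by linarith
    have h2 : b i < p j + D i := by linarith
    calc min (b i) (p j + D i) ≤ b i := min_le_left _ _
      _ ≤ min (b i) (t + D i) := le_min le_rfl h1
  · rw [if_neg hij]
    by_cases hij' : t ≤ v i j
    · rw [if_pos hij']
      have : 0 + D i ≤ t + D i := by
        have : 0 ≤ t := le_min hpj.le hM0
        linarith
      exact min_le_min le_rfl (by linarith)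
    · rw [if_neg hij']

/-- For any price vector `p̂ ≥ 0` there is a clearable price vector
`p* ≥ 0` with `p*_j ≤ p̂_j` for every dataset `j` and `r_i(p*) ≥ r_i(p̂)` for every
buyer `i`. -/
theorem stmt18 (n m : ℕ) (b : Fin n → ℝ) (hb : ∀ i, 0 ≤ b i)
    (v : Fin n → Fin m → ℝ) (hv : ∀ i j, 0 ≤ v i j)
    (phat : Fin m → ℝ) (hphat : ∀ j, 0 ≤ phat j) :
    ∃ pstar : Fin m → ℝ, (∀ j, 0 ≤ pstar j) ∧ Clearable b v pstar ∧
      (∀ j, pstar j ≤ phat j) ∧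
      ∀ i, buyerRev b v pstar i ≥ buyerRev b v phat i := by
  classical
  set c : Fin n → ℝ := fun i => buyerRev b v phat i with hc
  set S : Set (Fin m → ℝ) :=
    {p | (∀ j, 0 ≤ p j ∧ p j ≤ phat j) ∧ ∀ i, c i ≤ buyerRev b v p i} with hS
  -- closedness of S
  have hSeq : S = (Set.univ.pi fun j => Set.Icc (0:ℝ) (phat j)) ∩
      ⋂ i, ⋃ T : Finset (Fin m),
        {p | (∀ j ∈ T, p j ≤ v i j) ∧ c i ≤ ∑ j ∈ T, p j} := by
    ext p
    constructor
    · rintro ⟨hbound, hrev⟩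
      refine ⟨fun j _ => ⟨(hbound j).1, (hbound j).2⟩, ?_⟩
      refine Set.mem_iInter.2 fun i => Set.mem_iUnion.2
        ⟨Finset.univ.filter (fun j => p j ≤ v i j), ?_, ?_⟩
      · intro j hj; exact (Finset.mem_filter.1 hj).2
      · exact le_trans (hrev i) (min_le_right _ _)
    · rintro ⟨hbound, hrev⟩
      refine ⟨fun j => hbound j (Set.mem_univ j), fun i => ?_⟩
      obtain ⟨T, hT1, hT2⟩ := Set.mem_iUnion.1 (Set.mem_iInter.1 hrev i)
      refine le_min (min_le_left _ _) (le_trans hT2 ?_)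
      apply Finset.sum_le_sum_of_subset_of_nonneg
      · intro j hj
        exact Finset.mem_filter.2 ⟨Finset.mem_univ j, hT1 j hj⟩
      · intro j _ _
        exact (hbound j (Set.mem_univ j)).1
  have hSclosed : IsClosed S := by
    rw [hSeq]
    apply IsClosed.inter
    · exact isClosed_set_pi fun j _ => isClosed_Icc
    · apply isClosed_iInter
      intro i
      apply isClosed_iUnion_of_finite
      intro T
      have heq : {p : Fin m → ℝ | (∀ j ∈ T, p j ≤ v i j) ∧ c i ≤ ∑ j ∈ T, p j}
          = (⋂ j ∈ T, {p : Fin m → ℝ | p j ≤ v i j}) ∩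
            {p : Fin m → ℝ | c i ≤ ∑ j ∈ T, p j} := by
        ext p; simp
      rw [heq]
      apply IsClosed.inter
      · apply isClosed_biInter
        intro j _
        exact isClosed_le (continuous_apply j) continuous_const
      · exact isClosed_le continuous_const
          (continuous_finset_sum _ fun j _ => continuous_apply j)
  have hScompact : IsCompact S := by
    apply IsCompact.of_isClosed_subset
      (isCompact_univ_pi fun j => isCompact_Icc (a := (0:ℝ)) (b := phat j))
      hSclosed
    intro p hp j _
    exact ⟨(hp.1 j).1, (hp.1 j).2⟩
  have hSne : S.Nonempty := ⟨phat, ⟨fun j => ⟨hphat j, le_rfl⟩, fun i => le_rfl⟩⟩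
  obtain ⟨p, hpS, hpmin⟩ := hScompact.exists_isMinOn hSne
    (Continuous.continuousOn
      (continuous_finset_sum _ fun j _ => continuous_apply j :
        Continuous fun p : Fin m → ℝ => ∑ j, p j))
  refine ⟨p, fun j => (hpS.1 j).1, ?_, fun j => (hpS.1 j).2, fun i => hpS.2 i⟩
  -- p is clearable: otherwise apply `step` to contradict minimality
  intro j
  by_contra hcon
  push_neg at hcon
  obtain ⟨hj0, hjbad⟩ := hcon
  have hpj : 0 < p j := lt_of_le_of_ne (hpS.1 j).1 (Ne.symm hj0)
  obtain ⟨t, ht0, htlt, hrev⟩ := step b v p j hpj (by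
    intro i hij
    rcases lt_or_ge (b i) (desire v p i) with h | h
    · exact h
    · exact absurd hij (not_le.2 (hjbad i h)))
  have hp'S : Function.update p j t ∈ S := by
    constructor
    · intro k
      by_cases hk : k = j
      · subst hk
        simp only [Function.update_self]
        exact ⟨ht0, le_trans htlt.le (hpS.1 k).2⟩
      · rw [Function.update_of_ne hk]
        exact hpS.1 k
    · intro i
      exact le_trans (hpS.2 i) (hrev i)
  have hsum : ∑ k, Function.update p j t k < ∑ k, p k := by
    rw [Finset.sum_update_of_mem (Finset.mem_univ j)]
    rw [show (Finset.univ \ {j} : Finset (Fin m)) = Finset.univ.erase j by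
      rw [Finset.sdiff_singleton_eq_erase]]
    rw [← Finset.add_sum_erase _ _ (Finset.mem_univ j)]
    exact add_lt_add_left htlt _
  exact absurd (hpmin hp'S) (not_le.2 hsum)

end
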